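/- arXiv:math/9308203 — 2 statements merged into one kernel-verified Lean document; each statement's English description precedes it below -/
import Mathlib

section
/- Suppose I ⊆ NS_κ and L = {λ+1 : λ a limit ordinal} belongs to the pleasant closure P(I). Then for every stationary set Q of limit ordinals there exists Y ⊆ L with Y ∈ I such that B(Y) = {α−1 : α ∈ Y} is stationary and B(Y) ⊆ Q. -/
open Set

namespace PaperIdeals

/-- Diagonal union of a family `X` indexed by a set `A` of ordinals. -/
def diagU (A : Set Ordinal.{0}) (X : Ordinal.{0} → Set Ordinal.{0}) : Set Ordinal.{0} :=
  {ξ | ∃ α < ξ, α ∈ A ∧ ξ ∈ X α}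

/-- `X` is bounded below `κ`. -/
def BddIn (κ : Cardinal.{0}) (X : Set Ordinal.{0}) : Prop := ∃ θ < κ.ord, X ⊆ Iio θ

/-- `J` is a `<κ`-complete ideal on `κ` containing all singletons,
closed under subsets and (finite and small) unions. -/
def IsIdeal (κ : Cardinal.{0}) (J : Set Ordinal.{0} → Prop) : Prop :=
  (∀ X, J X → X ⊆ Iio κ.ord) ∧
  (∀ X Y, J X → Y ⊆ X → J Y) ∧
  (∀ X Y, J X → J Y → J (X ∪ Y)) ∧
  (∀ ξ < κ.ord, J {ξ}) ∧
  (∀ θ : Ordinal.{0}, θ.card < κ → ∀ X : Ordinal.{0} → Set Ordinal.{0},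
    (∀ α, J (X α)) → J (⋃ α ∈ Iio θ, X α))

def Proper (κ : Cardinal.{0}) (J : Set Ordinal.{0} → Prop) : Prop := ¬ J (Iio κ.ord)

/-- The coideal `I⁺`. -/
def Pos (κ : Cardinal.{0}) (J : Set Ordinal.{0} → Prop) (X : Set Ordinal.{0}) : Prop :=
  X ⊆ Iio κ.ord ∧ ¬ J X

/-- The dual filter `I*`. -/
def Dual (κ : Cardinal.{0}) (J : Set Ordinal.{0} → Prop) (X : Set Ordinal.{0}) : Prop :=
  X ⊆ Iio κ.ord ∧ J (Iio κ.ord \ X)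

/-- The restriction `I ↾ A`. -/
def restrict (κ : Cardinal.{0}) (J : Set Ordinal.{0} → Prop) (A : Set Ordinal.{0})
    (X : Set Ordinal.{0}) : Prop :=
  X ⊆ Iio κ.ord ∧ J (X ∩ A)

/-- Pleasant: closed under diagonal unions indexed by sets in the ideal. -/
def Pleasant (J : Set Ordinal.{0} → Prop) : Prop :=
  ∀ A, J A → ∀ X : Ordinal.{0} → Set Ordinal.{0}, (∀ α, J (X α)) → J (diagU A X)

/-- Prepleasant: closed under diagonal unions of bounded sets indexed by sets in the ideal. -/
def Prepleasant (κ : Cardinal.{0}) (J : Set Ordinal.{0} → Prop) : Prop :=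
  ∀ Q, J Q → ∀ B : Ordinal.{0} → Set Ordinal.{0}, (∀ α, BddIn κ (B α)) → J (diagU Q B)

/-- Normal: closed under full `κ`-indexed diagonal unions. -/
def Normal (κ : Cardinal.{0}) (J : Set Ordinal.{0} → Prop) : Prop :=
  ∀ X : Ordinal.{0} → Set Ordinal.{0}, (∀ α, J (X α)) → J (diagU (Iio κ.ord) X)

/-- Quasinormal ideal. -/
def Quasinormal (κ : Cardinal.{0}) (J : Set Ordinal.{0} → Prop) : Prop :=
  ∀ X : Ordinal.{0} → Set Ordinal.{0}, (∀ α, J (X α)) →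
    ∃ Q, Dual κ J Q ∧ J (diagU Q X)

/-- Club subset of `κ`: unbounded in `κ.ord` and closed under limits. -/
def IsClubIn (κ : Cardinal.{0}) (C : Set Ordinal.{0}) : Prop :=
  C ⊆ Iio κ.ord ∧ (∀ α < κ.ord, ∃ β ∈ C, α < β) ∧
  (∀ δ < κ.ord, Order.IsSuccLimit δ → (∀ α < δ, ∃ β ∈ C, α < β ∧ β < δ) → δ ∈ C)

/-- Stationary subset of `κ`. -/
def StatIn (κ : Cardinal.{0}) (S : Set Ordinal.{0}) : Prop :=
  S ⊆ Iio κ.ord ∧ ∀ C, IsClubIn κ C → (S ∩ C).Nonempty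

/-- The nonstationary ideal `NS κ`. -/
def NS (κ : Cardinal.{0}) (X : Set Ordinal.{0}) : Prop :=
  X ⊆ Iio κ.ord ∧ ∃ C, IsClubIn κ C ∧ X ∩ C = ∅

/-- Membership in the ideal generated by a family `S`. -/
def genIdeal (κ : Cardinal.{0}) (S : Set Ordinal.{0} → Prop) (X : Set Ordinal.{0}) : Prop :=
  ∀ K, IsIdeal κ K → (∀ Y, S Y → K Y) → K X

/-- Membership in the pleasant closure of `S` (smallest pleasant ideal containing `S`). -/
def PClosure (κ : Cardinal.{0}) (S : Set Ordinal.{0} → Prop) (X : Set Ordinal.{0}) : Prop :=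
  ∀ K, IsIdeal κ K → Pleasant K → (∀ Y, S Y → K Y) → K X

/-- Membership in the prepleasant closure of `S`. -/
def PPClosure (κ : Cardinal.{0}) (S : Set Ordinal.{0} → Prop) (X : Set Ordinal.{0}) : Prop :=
  ∀ K, IsIdeal κ K → Prepleasant κ K → (∀ Y, S Y → K Y) → K X

/-- p-point. -/
def PPoint (κ : Cardinal.{0}) (J : Set Ordinal.{0} → Prop) : Prop :=
  ∀ f : Ordinal.{0} → Ordinal.{0}, (∀ ξ : Ordinal.{0}, J {α | α < κ.ord ∧ f α = ξ}) →
    ∃ X, Dual κ J X ∧ ∀ ξ : Ordinal.{0}, BddIn κ {α | α ∈ X ∧ f α = ξ}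

/-- q-point. -/
def QPoint (κ : Cardinal.{0}) (J : Set Ordinal.{0} → Prop) : Prop :=
  ∀ f : Ordinal.{0} → Ordinal.{0}, (∀ ξ : Ordinal.{0}, BddIn κ {α | α < κ.ord ∧ f α = ξ}) →
    ∃ X, Dual κ J X ∧ Set.InjOn f X

/-- `L = {λ + 1 : λ < κ a limit ordinal}`. -/
def LSet (κ : Cardinal.{0}) : Set Ordinal.{0} :=
  {x | ∃ lam : Ordinal.{0}, Order.IsSuccLimit lam ∧ x = lam + 1 ∧ x < κ.ord}

/-- `B(Y) = {α - 1 : α ∈ Y}` for a set `Y` of successor ordinals. -/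
def BSet (Y : Set Ordinal.{0}) : Set Ordinal.{0} := {γ | γ + 1 ∈ Y}

/-- `W = {λ < κ : cof λ = ω}`. -/
def WSet (κ : Cardinal.{0}) : Set Ordinal.{0} :=
  {lam | lam < κ.ord ∧ lam.cof = Cardinal.aleph0}

/-- Węglorz's ideal `J_κ`. -/
def Weglorz (κ : Cardinal.{0}) (X : Set Ordinal.{0}) : Prop :=
  X ⊆ Iio κ.ord ∧ ∃ (f : Ordinal.{0} → Ordinal.{0}) (θ : Cardinal.{0}), θ < κ ∧
    (∀ α ∈ X, α ≠ 0 → f α < α) ∧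
    ∀ ξ : Ordinal.{0}, Cardinal.mk {α : Ordinal.{0} // α ∈ X ∧ f α = ξ} ≤ Cardinal.lift.{1} θ


section Aux

variable {κ : Cardinal.{0}}

private lemma ord_limit (hreg : κ.IsRegular) : Order.IsSuccLimit κ.ord :=
  Cardinal.isSuccLimit_ord hreg.aleph0_le

/-- Closure points under a function `g` exist arbitrarily high below a regular
uncountable cardinal. -/
private lemma closurePoint (hreg : κ.IsRegular) (hunc : Cardinal.aleph0 < κ)
    (g : Ordinal.{0} → Ordinal.{0}) (hg : ∀ β, g β < κ.ord) :
    ∀ α < κ.ord, ∃ δ, α < δ ∧ δ < κ.ord ∧ Order.IsSuccLimit δ ∧ ∀ β < δ, g β < δ := by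
  intro α hα
  have hord := ord_limit hreg
  set step : Ordinal.{0} → Ordinal.{0} :=
    fun x => Ordinal.blsub (x + 1) (fun β _ => max (g β) x) with hstepdef
  have hstep_lt : ∀ x < κ.ord, step x < κ.ord := by
    intro x hx
    apply Cardinal.blsub_lt_ord_of_isRegular hreg
    · rw [← Cardinal.lt_ord]
      rw [Ordinal.add_one_eq_succ]
      exact hord.succ_lt hx
    · intro i _
      exact max_lt (hg i) hx
  have hself_lt : ∀ x, x < step x := by
    intro x
    have := Ordinal.lt_blsub (fun β (_ : β < x + 1) => max (g β) x) x
      (by rw [Ordinal.add_one_eq_succ]; exact Order.lt_succ x)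
    exact lt_of_le_of_lt (le_max_right _ _) this
  have hgle : ∀ x β, β ≤ x → g β < step x := by
    intro x β hβ
    have := Ordinal.lt_blsub (fun β (_ : β < x + 1) => max (g β) x) β
      (by rw [Ordinal.add_one_eq_succ]; exact Order.lt_succ_iff.mpr hβ)
    exact lt_of_le_of_lt (le_max_left _ _) this
  -- iterate
  let f : ℕ → Ordinal.{0} := fun n => step^[n] α
  have hf0 : f 0 = α := rfl
  have hfsucc : ∀ n, f (n + 1) = step (f n) := by
    intro n; simp [f, Function.iterate_succ_apply']
  have hflt : ∀ n, f n < κ.ord := by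
    intro n; induction n with
    | zero => exact hα
    | succ n ih => rw [hfsucc]; exact hstep_lt _ ih
  have hfmono : ∀ n, f n < f (n + 1) := by
    intro n; rw [hfsucc]; exact hself_lt _
  set δ : Ordinal.{0} := ⨆ n, f n with hδdef
  have hle : ∀ n, f n ≤ δ := fun n => le_ciSup (Ordinal.bddAbove_range f) n
  have hltδ : ∀ {a : Ordinal.{0}}, a < δ ↔ ∃ n, a < f n := by
    intro a; exact Ordinal.lt_iSup_iff
  have hδκ : δ < κ.ord := by
    apply Cardinal.iSup_lt_ord_of_isRegular hreg
    · rw [Cardinal.mk_nat]; exact hunc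
    · exact hflt
  have hαδ : α < δ := lt_of_lt_of_le (hf0 ▸ hfmono 0) (hle 1)
  have hδlim : Order.IsSuccLimit δ := by
    rw [Order.isSuccLimit_iff_of_orderBot]
    constructor
    · exact fun h => absurd (h ▸ hαδ) (not_lt_bot (a := α))
    · refine Order.isSuccPrelimit_of_succ_lt fun a ha => ?_
      obtain ⟨n, hn⟩ := hltδ.mp ha
      have : Order.succ a ≤ f n := Order.succ_le_of_lt hn
      exact lt_of_le_of_lt this (lt_of_lt_of_le (hfmono n) (hle (n + 1)))
  refine ⟨δ, hαδ, hδκ, hδlim, ?_⟩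
  intro β hβ
  obtain ⟨n, hn⟩ := hltδ.mp hβ
  have : g β < step (f n) := hgle _ _ hn.le
  rw [← hfsucc] at this
  exact lt_of_lt_of_le this (hle (n + 1))

/-- Intersection of fewer than `κ` clubs is club. -/
private lemma club_interFamily (hreg : κ.IsRegular) (hunc : Cardinal.aleph0 < κ)
    (θ : Ordinal.{0}) (hθ : θ.card < κ) (Cs : Ordinal.{0} → Set Ordinal.{0})
    (hCs : ∀ i < θ, IsClubIn κ (Cs i)) :
    IsClubIn κ {γ | γ < κ.ord ∧ ∀ i < θ, γ ∈ Cs i} := by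
  have hord := ord_limit hreg
  have hpick : ∀ (i β : Ordinal.{0}), ∃ x, x < κ.ord ∧
      (i < θ → β < κ.ord → x ∈ Cs i ∧ β < x) := by
    intro i β
    by_cases h : i < θ ∧ β < κ.ord
    · obtain ⟨x, hx1, hx2⟩ := (hCs i h.1).2.1 β h.2
      exact ⟨x, (hCs i h.1).1 hx1, fun _ _ => ⟨hx1, hx2⟩⟩
    · exact ⟨0, hord.pos, fun h1 h2 => absurd ⟨h1, h2⟩ h⟩
  choose p hp1 hp2 using hpick
  refine ⟨fun γ hγ => hγ.1, ?_, ?_⟩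
  · -- unbounded
    intro α hα
    set g : Ordinal.{0} → Ordinal.{0} := fun β => Ordinal.blsub θ (fun i _ => p i β) with hgdef
    have hg : ∀ β, g β < κ.ord := by
      intro β
      exact Cardinal.blsub_lt_ord_of_isRegular hreg hθ (fun i _ => hp1 i β)
    obtain ⟨δ, hαδ, hδκ, hδlim, hδcl⟩ := closurePoint hreg hunc g hg α hα
    refine ⟨δ, ⟨hδκ, ?_⟩, hαδ⟩
    intro i hi
    apply (hCs i hi).2.2 δ hδκ hδlim
    intro a ha
    have haκ : a < κ.ord := lt_trans ha hδκ
    obtain ⟨hmem, hlt⟩ := hp2 i a hi haκ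
    have h1 : p i a < g a := Ordinal.lt_blsub (fun i _ => p i a) i hi
    exact ⟨p i a, hmem, hlt, lt_trans h1 (hδcl a ha)⟩
  · -- closed
    intro δ hδκ hδlim happ
    refine ⟨hδκ, fun i hi => (hCs i hi).2.2 δ hδκ hδlim ?_⟩
    intro a ha
    obtain ⟨β, hβD, h1, h2⟩ := happ a ha
    exact ⟨β, hβD.2 i hi, h1, h2⟩

/-- Diagonal intersection of clubs is club. -/
private lemma club_diag (hreg : κ.IsRegular) (hunc : Cardinal.aleph0 < κ)
    (Cs : Ordinal.{0} → Set Ordinal.{0}) (hCs : ∀ i, IsClubIn κ (Cs i)) :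
    IsClubIn κ {γ | γ < κ.ord ∧ ∀ i < γ, γ ∈ Cs i} := by
  have hord := ord_limit hreg
  refine ⟨fun γ hγ => hγ.1, ?_, ?_⟩
  · -- unbounded
    intro α hα
    have hpick : ∀ β : Ordinal.{0}, ∃ x, x < κ.ord ∧
        (β < κ.ord → ((x < κ.ord ∧ ∀ i < β, x ∈ Cs i) ∧ β < x)) := by
      intro β
      by_cases hβ : β < κ.ord
      · have hclub := club_interFamily hreg hunc β (Cardinal.lt_ord.mp hβ) Cs
          (fun i _ => hCs i)
        obtain ⟨x, hx1, hx2⟩ := hclub.2.1 β hβ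
        exact ⟨x, hx1.1, fun _ => ⟨hx1, hx2⟩⟩
      · exact ⟨0, hord.pos, fun h => absurd h hβ⟩
    choose g hg1 hg2 using hpick
    obtain ⟨δ, hαδ, hδκ, hδlim, hδcl⟩ := closurePoint hreg hunc g hg1 α hα
    refine ⟨δ, ⟨hδκ, ?_⟩, hαδ⟩
    intro i hi
    apply (hCs i).2.2 δ hδκ hδlim
    intro a ha
    have hb : max i a + 1 < δ := by
      rw [Ordinal.add_one_eq_succ]
      exact hδlim.succ_lt (max_lt hi ha)
    set b := max i a + 1 with hbdef
    have hbκ : b < κ.ord := lt_trans hb hδκ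
    obtain ⟨⟨hgκ, hgall⟩, hgt⟩ := hg2 b hbκ
    have hib : i < b := lt_of_le_of_lt (le_max_left i a)
      (by rw [hbdef, Ordinal.add_one_eq_succ]; exact Order.lt_succ _)
    refine ⟨g b, hgall i hib, ?_, hδcl b hb⟩
    exact lt_of_le_of_lt (le_max_right i a)
      (lt_of_lt_of_le (by rw [hbdef, Ordinal.add_one_eq_succ]; exact Order.lt_succ _) hgt.le)
  · -- closed
    intro δ hδκ hδlim happ
    refine ⟨hδκ, fun i hi => (hCs i).2.2 δ hδκ hδlim ?_⟩
    intro a ha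
    obtain ⟨β, hβD, h1, h2⟩ := happ (max i a) (max_lt hi ha)
    exact ⟨β, hβD.2 i (lt_of_le_of_lt (le_max_left i a) h1),
      lt_of_le_of_lt (le_max_right i a) h1, h2⟩

private lemma club_inter2 (hreg : κ.IsRegular) (hunc : Cardinal.aleph0 < κ)
    {C₁ C₂ : Set Ordinal.{0}} (h₁ : IsClubIn κ C₁) (h₂ : IsClubIn κ C₂) :
    IsClubIn κ (C₁ ∩ C₂) := by
  have h2e : (2 : Ordinal.{0}) = Order.succ 1 := by
    rw [← Ordinal.add_one_eq_succ, one_add_one_eq_two]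
  have hlt2 : ∀ i : Ordinal.{0}, i < 2 → i = 0 ∨ i = 1 := by
    intro i hi
    rcases eq_or_ne i 0 with h | h
    · exact Or.inl h
    · right
      rw [h2e, Order.lt_succ_iff] at hi
      exact le_antisymm hi (Ordinal.one_le_iff_ne_zero.mpr h)
    
  have hcard : (2 : Ordinal.{0}).card < κ := by
    have : (2 : Ordinal.{0}).card = 2 := by simp
    rw [this]
    exact lt_trans (Cardinal.nat_lt_aleph0 2) hunc
  set Cs : Ordinal.{0} → Set Ordinal.{0} := fun i => if i = 0 then C₁ else C₂ with hCsdef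
  have hCs : ∀ i < (2 : Ordinal.{0}), IsClubIn κ (Cs i) := by
    intro i _
    by_cases h : i = 0 <;> simp [hCsdef, h, h₁, h₂]
  have hclub := club_interFamily hreg hunc 2 hcard Cs hCs
  have heq : {γ | γ < κ.ord ∧ ∀ i < (2 : Ordinal.{0}), γ ∈ Cs i} = C₁ ∩ C₂ := by
    ext γ
    constructor
    · intro ⟨_, hall⟩
      have ha := hall 0 (by rw [h2e]; exact lt_of_le_of_lt zero_le_one (Order.lt_succ 1))
      have hb := hall 1 (by rw [h2e]; exact Order.lt_succ 1)
      simp [hCsdef] at ha hb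
      exact ⟨ha, hb⟩
    · intro ⟨ha, hb⟩
      refine ⟨h₁.1 ha, fun i hi => ?_⟩
      rcases hlt2 i hi with h | h <;> simp [hCsdef, h, ha, hb]
  rwa [heq] at hclub

private lemma NS_mono {X Y : Set Ordinal.{0}} (hX : NS κ X) (hYX : Y ⊆ X) : NS κ Y := by
  obtain ⟨hs, C, hC, hdis⟩ := hX
  refine ⟨hYX.trans hs, C, hC, ?_⟩
  rw [Set.eq_empty_iff_forall_notMem] at hdis ⊢
  exact fun γ hγ => hdis γ ⟨hYX hγ.1, hγ.2⟩

private lemma NS_union (hreg : κ.IsRegular) (hunc : Cardinal.aleph0 < κ)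
    {X Y : Set Ordinal.{0}} (hX : NS κ X) (hY : NS κ Y) : NS κ (X ∪ Y) := by
  obtain ⟨hs1, C₁, hC₁, hd₁⟩ := hX
  obtain ⟨hs2, C₂, hC₂, hd₂⟩ := hY
  refine ⟨Set.union_subset hs1 hs2, C₁ ∩ C₂, club_inter2 hreg hunc hC₁ hC₂, ?_⟩
  rw [Set.eq_empty_iff_forall_notMem] at hd₁ hd₂ ⊢
  rintro γ ⟨h1 | h1, h2⟩
  · exact hd₁ γ ⟨h1, h2.1⟩
  · exact hd₂ γ ⟨h1, h2.2⟩

private lemma NS_iUnion (hreg : κ.IsRegular) (hunc : Cardinal.aleph0 < κ)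
    (θ : Ordinal.{0}) (hθ : θ.card < κ) (S : Ordinal.{0} → Set Ordinal.{0})
    (hS : ∀ α, NS κ (S α)) : NS κ (⋃ α ∈ Iio θ, S α) := by
  have hsub : (⋃ α ∈ Iio θ, S α) ⊆ Iio κ.ord := by
    intro γ hγ
    simp only [Set.mem_iUnion] at hγ
    obtain ⟨α, _, hγ⟩ := hγ
    exact (hS α).1 hγ
  choose Cs hCs hdis using fun α => (hS α).2
  refine ⟨hsub, {γ | γ < κ.ord ∧ ∀ i < θ, γ ∈ Cs i},
    club_interFamily hreg hunc θ hθ Cs (fun i _ => hCs i), ?_⟩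
  rw [Set.eq_empty_iff_forall_notMem]
  rintro γ ⟨h1, _, hall⟩
  simp only [Set.mem_iUnion] at h1
  obtain ⟨α, hα, hγ⟩ := h1
  have := hdis α
  rw [Set.eq_empty_iff_forall_notMem] at this
  exact this γ ⟨hγ, hall α hα⟩

private lemma NS_singleton (hreg : κ.IsRegular) {ξ : Ordinal.{0}} (hξ : ξ < κ.ord) :
    NS κ {ξ} := by
  have hord := ord_limit hreg
  refine ⟨Set.singleton_subset_iff.mpr hξ, Ioi ξ ∩ Iio κ.ord, ?_, ?_⟩
  · refine ⟨fun γ hγ => hγ.2, ?_, ?_⟩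
    · intro α hα
      refine ⟨max α ξ + 1, ⟨?_, ?_⟩, ?_⟩
      · exact lt_of_le_of_lt (le_max_right α ξ)
          (by rw [Ordinal.add_one_eq_succ]; exact Order.lt_succ _)
      · rw [Ordinal.add_one_eq_succ]; exact hord.succ_lt (max_lt hα hξ)
      · exact lt_of_le_of_lt (le_max_left α ξ)
          (by rw [Ordinal.add_one_eq_succ]; exact Order.lt_succ _)
    · intro δ hδκ hδlim happ
      obtain ⟨β, hβ, _, h2⟩ := happ 0 hδlim.pos
      exact ⟨lt_trans hβ.1 h2, hδκ⟩
  · rw [Set.eq_empty_iff_forall_notMem]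
    rintro γ ⟨rfl, h2, _⟩
    exact lt_irrefl _ (Set.mem_Ioi.mp h2)

private lemma notStat_NS {S : Set Ordinal.{0}} (hsub : S ⊆ Iio κ.ord)
    (h : ¬ StatIn κ S) : NS κ S := by
  rw [StatIn, not_and] at h
  have := h hsub
  push_neg at this
  obtain ⟨C, hC, hCe⟩ := this
  exact ⟨hsub, C, hC, hCe⟩

end Aux

/-- If `I ⊆ NS κ` and `L ∈ P(I)`, then for every stationary set `Q` of limit
ordinals there is `Y ⊆ L` with `Y ∈ I`, `B(Y)` stationary and `B(Y) ⊆ Q`. -/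
theorem stmt16 (κ : Cardinal.{0}) (hreg : κ.IsRegular) (hunc : Cardinal.aleph0 < κ)
    (J : Set Ordinal.{0} → Prop) (hJ : IsIdeal κ J) (hsub : ∀ X, J X → NS κ X)
    (hL : PClosure κ J (LSet κ))
    (Q : Set Ordinal.{0}) (hQstat : StatIn κ Q) (hQlim : ∀ α ∈ Q, Order.IsSuccLimit α) :
    ∃ Y, Y ⊆ LSet κ ∧ J Y ∧ StatIn κ (BSet Y) ∧ BSet Y ⊆ Q := by
  by_contra hcon
  push_neg at hcon
  have hord := ord_limit hreg
  have hQsub : Q ⊆ Iio κ.ord := hQstat.1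
  -- the auxiliary ideal
  set K : Set Ordinal.{0} → Prop :=
    fun X => X ⊆ Iio κ.ord ∧ NS κ ((X ∪ BSet X) ∩ Q) with hKdef
  -- J ⊆ K
  have hJK : ∀ X, J X → K X := by
    intro X hX
    have hXs : X ⊆ Iio κ.ord := hJ.1 X hX
    refine ⟨hXs, ?_⟩
    set Y : Set Ordinal.{0} := X ∩ {x | ∃ γ ∈ Q, x = γ + 1} with hYdef
    have hYL : Y ⊆ LSet κ := by
      rintro x ⟨hx1, γ, hγ, rfl⟩
      exact ⟨γ, hQlim γ hγ, rfl, hXs hx1⟩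
    have hYJ : J Y := hJ.2.1 X Y hX Set.inter_subset_left
    have hBY : BSet Y = BSet X ∩ Q := by
      ext γ
      constructor
      · rintro ⟨hx1, γ', hγ', he⟩
        have : γ = γ' := by
          rw [Ordinal.add_one_eq_succ, Ordinal.add_one_eq_succ] at he
          exact Order.succ_injective he
        exact ⟨hx1, this ▸ hγ'⟩
      · rintro ⟨h1, h2⟩
        exact ⟨h1, γ, h2, rfl⟩
    have hstat : ¬ StatIn κ (BSet Y) := by
      intro hs
      exact hcon Y hYL hYJ hs (hBY ▸ Set.inter_subset_right)
    have hNS1 : NS κ (BSet X ∩ Q) := by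
      rw [← hBY]
      exact notStat_NS (fun γ hγ => hQsub (hBY ▸ hγ : γ ∈ BSet X ∩ Q).2) hstat
    have hNS2 : NS κ (X ∩ Q) := NS_mono (hsub X hX) Set.inter_subset_left
    rw [Set.union_inter_distrib_right]
    exact NS_union hreg hunc hNS2 hNS1
  -- K is an ideal
  have hKideal : IsIdeal κ K := by
    refine ⟨fun X hX => hX.1, ?_, ?_, ?_, ?_⟩
    · -- subsets
      rintro X Y ⟨hX1, hX2⟩ hYX
      refine ⟨hYX.trans hX1, NS_mono hX2 ?_⟩
      exact Set.inter_subset_inter_left _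
        (Set.union_subset_union hYX (fun γ h => hYX h))
    · -- binary unions
      rintro X Y ⟨hX1, hX2⟩ ⟨hY1, hY2⟩
      refine ⟨Set.union_subset hX1 hY1, ?_⟩
      apply NS_mono (NS_union hreg hunc hX2 hY2)
      rintro γ ⟨h1 | h1, h2⟩
      · rcases h1 with h1 | h1
        · exact Or.inl ⟨Or.inl h1, h2⟩
        · exact Or.inr ⟨Or.inl h1, h2⟩
      · rcases h1 with h1 | h1
        · exact Or.inl ⟨Or.inr h1, h2⟩
        · exact Or.inr ⟨Or.inr h1, h2⟩
    · -- singletons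
      intro ξ hξ
      refine ⟨Set.singleton_subset_iff.mpr hξ, ?_⟩
      by_cases hs : ∃ η : Ordinal.{0}, η + 1 = ξ
      · obtain ⟨η, rfl⟩ := hs
        have hη : η < κ.ord := lt_trans
          (by rw [Ordinal.add_one_eq_succ]; exact Order.lt_succ η) hξ
        apply NS_mono (NS_union hreg hunc (NS_singleton hreg hξ) (NS_singleton hreg hη))
        rintro γ ⟨h1 | h1, _⟩
        · exact Or.inl h1
        · right
          have h1' : γ + 1 = η + 1 := h1
          rw [Ordinal.add_one_eq_succ, Ordinal.add_one_eq_succ] at h1'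
          exact Order.succ_injective h1'
      · apply NS_mono (NS_singleton hreg hξ)
        rintro γ ⟨h1 | h1, _⟩
        · exact h1
        · exact absurd ⟨γ, h1⟩ hs
    · -- small unions
      intro θ hθ X hX
      have hsub2 : (⋃ α ∈ Iio θ, X α) ⊆ Iio κ.ord := by
        intro γ hγ
        simp only [Set.mem_iUnion] at hγ
        obtain ⟨α, _, hγ⟩ := hγ
        exact (hX α).1 hγ
      refine ⟨hsub2, ?_⟩
      apply NS_mono (NS_iUnion hreg hunc θ hθ
        (fun α => (X α ∪ BSet (X α)) ∩ Q) (fun α => (hX α).2))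
      rintro γ ⟨h1 | h1, h2⟩
      · simp only [Set.mem_iUnion] at h1 ⊢
        obtain ⟨α, hα, hγ⟩ := h1
        exact ⟨α, hα, Or.inl hγ, h2⟩
      · simp only [BSet, Set.mem_setOf_eq, Set.mem_iUnion] at h1
        simp only [Set.mem_iUnion]
        obtain ⟨α, hα, hγ⟩ := h1
        exact ⟨α, hα, Or.inr hγ, h2⟩
  -- K is pleasant
  have hKpleasant : Pleasant K := by
    rintro A ⟨hA1, hA2⟩ X hX
    have hdsub : diagU A X ⊆ Iio κ.ord := by
      rintro γ ⟨α, hαγ, hαA, hγX⟩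
      exact (hX α).1 hγX
    refine ⟨hdsub, ?_⟩
    obtain ⟨_, C, hC, hCdis⟩ := hA2
    choose Cs hCs hCdiss using fun α => ((hX α).2).2
    set D : Set Ordinal.{0} := {γ | γ < κ.ord ∧ ∀ i < γ, γ ∈ C ∩ Cs i} with hDdef
    have hDclub : IsClubIn κ D :=
      club_diag hreg hunc (fun i => C ∩ Cs i)
        (fun i => club_inter2 hreg hunc hC (hCs i))
    refine ⟨fun γ hγ => hQsub hγ.2, D, hDclub, ?_⟩
    rw [Set.eq_empty_iff_forall_notMem]
    rintro γ ⟨⟨h1, hγQ⟩, hγκ, hall⟩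
    have hγlim := hQlim γ hγQ
    have hγC : γ ∈ C := (hall 0 hγlim.pos).1
    have hdisA := Set.eq_empty_iff_forall_notMem.mp hCdis
    rcases h1 with h1 | h1
    · obtain ⟨α, hαγ, hαA, hγX⟩ := h1
      exact Set.eq_empty_iff_forall_notMem.mp (hCdiss α) γ
        ⟨⟨Or.inl hγX, hγQ⟩, (hall α hαγ).2⟩
    · obtain ⟨α, hα, hαA, hγX⟩ := h1
      have hα' : α ≤ γ := by
        rw [Ordinal.add_one_eq_succ, Order.lt_succ_iff] at hα
        exact hα
      rcases lt_or_eq_of_le hα' with hlt | rfl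
      · exact Set.eq_empty_iff_forall_notMem.mp (hCdiss α) γ
          ⟨⟨Or.inr hγX, hγQ⟩, (hall α hlt).2⟩
      · exact hdisA _ ⟨⟨Or.inl hαA, hγQ⟩, hγC⟩
  -- conclude
  have hKL : K (LSet κ) := hL K hKideal hKpleasant hJK
  obtain ⟨_, C, hC, hdis⟩ := hKL.2
  obtain ⟨γ, hγQ, hγC⟩ := hQstat.2 C hC
  have hγL : γ ∈ BSet (LSet κ) := by
    refine ⟨γ, hQlim γ hγQ, rfl, ?_⟩
    rw [Ordinal.add_one_eq_succ]
    exact hord.succ_lt (hQsub hγQ)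
  exact Set.eq_empty_iff_forall_notMem.mp hdis γ ⟨⟨Or.inr hγL, hγQ⟩, hγC⟩

end PaperIdeals
end

section
/- An ideal I on κ is quasinormal if and only if I is selective (both a p-point and a q-point). -/
open Set

namespace PaperIdeals

section AuxLemmas

variable {κ : Cardinal.{0}} {J : Set Ordinal.{0} → Prop}

lemma succ_lt_ord (hκ : Cardinal.aleph0 ≤ κ) {a : Ordinal.{0}} (ha : a < κ.ord) :
    a + 1 < κ.ord := by
  rw [Ordinal.add_one_eq_succ]
  exact (Cardinal.isSuccLimit_ord hκ).succ_lt ha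

lemma zero_lt_ord (hκ : Cardinal.aleph0 ≤ κ) : (0 : Ordinal.{0}) < κ.ord :=
  Cardinal.lt_ord.mpr (by simpa using Cardinal.aleph0_pos.trans_le hκ)

lemma ideal_empty (hJ : IsIdeal κ J) (hκ : Cardinal.aleph0 ≤ κ) : J (∅ : Set Ordinal.{0}) :=
  hJ.2.1 {0} ∅ (hJ.2.2.2.1 0 (zero_lt_ord hκ)) (empty_subset _)

lemma ideal_of_bddIn (hJ : IsIdeal κ J) (hκ : Cardinal.aleph0 ≤ κ) {X : Set Ordinal.{0}}
    (hX : BddIn κ X) : J X := by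
  obtain ⟨θ, hθ, hsub⟩ := hX
  have hY : J (⋃ α ∈ Iio θ, ({α} ∩ Iio κ.ord)) := by
    apply hJ.2.2.2.2 θ (Cardinal.lt_ord.mp hθ)
    intro α
    by_cases h : α < κ.ord
    · exact hJ.2.1 {α} _ (hJ.2.2.2.1 α h) inter_subset_left
    · have he : ({α} ∩ Iio κ.ord : Set Ordinal.{0}) = ∅ := by
        ext x
        simp only [mem_inter_iff, mem_singleton_iff, mem_Iio, mem_empty_iff_false, iff_false,
          not_and]
        rintro rfl
        exact h
      rw [he]
      exact ideal_empty hJ hκ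
  apply hJ.2.1 _ _ hY
  intro x hx
  have hxθ : x < θ := hsub hx
  exact mem_biUnion hxθ ⟨rfl, hxθ.trans hθ⟩

lemma dual_inter (hJ : IsIdeal κ J) {A B : Set Ordinal.{0}} (hA : Dual κ J A)
    (hB : Dual κ J B) : Dual κ J (A ∩ B) := by
  refine ⟨fun x hx => hA.1 hx.1, hJ.2.1 _ _ (hJ.2.2.1 _ _ hA.2 hB.2) ?_⟩
  intro x hx
  by_cases h : x ∈ A
  · exact Or.inr ⟨hx.1, fun hxB => hx.2 ⟨h, hxB⟩⟩
  · exact Or.inl ⟨hx.1, h⟩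

/-- From quasinormality: every `J`-small function is injective on a set in the dual filter. -/
lemma injOn_of_quasinormal (hJ : IsIdeal κ J) (hqn : Quasinormal κ J)
    (f : Ordinal.{0} → Ordinal.{0}) (hf : ∀ ξ : Ordinal.{0}, J {α | α < κ.ord ∧ f α = ξ}) :
    ∃ X, Dual κ J X ∧ Set.InjOn f X := by
  obtain ⟨Q, hQ, hD⟩ := hqn (fun α => {β | β < κ.ord ∧ f β = f α}) (fun α => hf (f α))
  set D := diagU Q (fun α => {β | β < κ.ord ∧ f β = f α}) with hDdef
  refine ⟨Q \ D, ⟨fun x hx => hQ.1 hx.1, ?_⟩, ?_⟩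
  · apply hJ.2.1 ((Iio κ.ord \ Q) ∪ D) _ (hJ.2.2.1 _ _ hQ.2 hD)
    intro x hx
    by_cases h : x ∈ Q
    · exact Or.inr (by_contra fun hD' => hx.2 ⟨h, hD'⟩)
    · exact Or.inl ⟨hx.1, h⟩
  · intro a ha b hb hfab
    by_contra hne
    rcases lt_or_gt_of_ne hne with h | h
    · exact hb.2 ⟨a, h, ha.1, hQ.1 hb.1, hfab.symm⟩
    · exact ha.2 ⟨b, h, hb.1, hQ.1 ha.1, hfab⟩

end AuxLemmas

/-- `I` is quasinormal iff `I` is selective (both a p-point and a q-point). -/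
theorem stmt19 (κ : Cardinal.{0}) (hreg : κ.IsRegular) (hunc : Cardinal.aleph0 < κ)
    (J : Set Ordinal.{0} → Prop) (hJ : IsIdeal κ J) (hprop : Proper κ J) :
    Quasinormal κ J ↔ (PPoint κ J ∧ QPoint κ J) := by
  have hκ : Cardinal.aleph0 ≤ κ := hreg.1
  constructor
  · intro hqn
    constructor
    · -- p-point
      intro f hf
      obtain ⟨X, hXd, hinj⟩ := injOn_of_quasinormal hJ hqn f hf
      refine ⟨X, hXd, ?_⟩
      intro ξ
      by_cases hne : ({α | α ∈ X ∧ f α = ξ}).Nonempty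
      · obtain ⟨a, haX, hafa⟩ := hne
        refine ⟨a + 1, succ_lt_ord hκ (hXd.1 haX), ?_⟩
        intro b hb
        have hba : b = a := hinj hb.1 haX (by rw [hb.2, hafa])
        subst hba
        have : b + 1 = Order.succ b := Ordinal.add_one_eq_succ b
        rw [mem_Iio, this]
        exact Order.lt_succ b
      · refine ⟨0, zero_lt_ord hκ, ?_⟩
        intro b hb
        exact absurd ⟨b, hb⟩ hne
    · -- q-point
      intro f hf
      exact injOn_of_quasinormal hJ hqn f
        (fun ξ => ideal_of_bddIn hJ hκ
          (by obtain ⟨θ, hθ, hsub⟩ := hf ξ; exact ⟨θ, hθ, hsub⟩))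
  · rintro ⟨hp, hq⟩
    intro X hX
    classical
    -- monotonized family
    set X' : Ordinal.{0} → Set Ordinal.{0} := fun α => ⋃ β ∈ Iio (α + 1), X β with hX'def
    have hX'J : ∀ α < κ.ord, J (X' α) := fun α hα =>
      hJ.2.2.2.2 (α + 1) (Cardinal.lt_ord.mp (succ_lt_ord hκ hα)) X hX
    have hXX' : ∀ α, X α ⊆ X' α := fun α =>
      subset_biUnion_of_mem (u := fun β => X β) (show α ∈ Iio (α + 1) by
        rw [mem_Iio, Ordinal.add_one_eq_succ]; exact Order.lt_succ α)
    -- the least-witness function g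
    set P : Ordinal.{0} → Ordinal.{0} → Prop := fun ξ α => α < ξ ∧ ξ ∈ X' α with hPdef
    set g : Ordinal.{0} → Ordinal.{0} := fun ξ =>
      if h : {α | P ξ α}.Nonempty then Ordinal.lt_wf.min _ h else ξ with hgdef
    have hgle : ∀ ξ, g ξ ≤ ξ := by
      intro ξ
      simp only [hgdef]
      by_cases h : {α | P ξ α}.Nonempty
      · rw [dif_pos h]
        exact le_of_lt (Ordinal.lt_wf.min_mem _ h).1
      · rw [dif_neg h]
    have hgmin : ∀ ξ α, α < ξ → ξ ∈ X' α → g ξ ≤ α := by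
      intro ξ α h1 h2
      have hne : {α | P ξ α}.Nonempty := ⟨α, h1, h2⟩
      simp only [hgdef, dif_pos hne]
      exact le_of_not_gt (Ordinal.lt_wf.not_lt_min _ (show α ∈ {α | P ξ α} from ⟨h1, h2⟩))
    have hgfib : ∀ v : Ordinal.{0}, J {α | α < κ.ord ∧ g α = v} := by
      intro v
      by_cases hv : v < κ.ord
      · apply hJ.2.1 (X' v ∪ {v}) _ (hJ.2.2.1 _ _ (hX'J v hv) (hJ.2.2.2.1 v hv))
        rintro ξ ⟨hξκ, hξg⟩
        simp only [hgdef] at hξg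
        by_cases h : {α | P ξ α}.Nonempty
        · rw [dif_pos h] at hξg
          have := (Ordinal.lt_wf.min_mem _ h).2
          rw [hξg] at this
          exact Or.inl this
        · rw [dif_neg h] at hξg
          exact Or.inr (by rw [← hξg]; rfl)
      · have he : {α | α < κ.ord ∧ g α = v} = ∅ := by
          ext ξ
          simp only [mem_setOf_eq, mem_empty_iff_false, iff_false, not_and]
          intro hξκ hξg
          exact hv (lt_of_le_of_lt (hξg ▸ hgle ξ) hξκ)
        rw [he]
        exact ideal_empty hJ hκ
    -- p-point applied to g
    obtain ⟨Y, hYd, hYb⟩ := hp g hgfib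
    -- bounds for fibers of g on Y
    set t : Ordinal.{0} → Ordinal.{0} := fun η => Classical.choose (hYb η) with htdef
    have htspec : ∀ η, t η < κ.ord ∧ {α | α ∈ Y ∧ g α = η} ⊆ Iio (t η) := by
      intro η
      obtain ⟨h1, h2⟩ := Classical.choose_spec (hYb η)
      exact ⟨h1, h2⟩
    -- the bounding function φ
    set φ : Ordinal.{0} → Ordinal.{0} := fun ζ => Ordinal.bsup ζ (fun η _ => t η + 1) with hφdef
    have hφlt : ∀ ζ < κ.ord, φ ζ < κ.ord := fun ζ hζ =>
      Cardinal.bsup_lt_ord_of_isRegular hreg (Cardinal.lt_ord.mp hζ)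
        (fun i _ => succ_lt_ord hκ (htspec i).1)
    have hφprop : ∀ ζ, ∀ ξ ∈ Y, g ξ < ζ → ξ < φ ζ := by
      intro ζ ξ hξY hgζ
      have h1 : ξ < t (g ξ) := (htspec (g ξ)).2 ⟨hξY, rfl⟩
      have h2 : t (g ξ) + 1 ≤ φ ζ := Ordinal.le_bsup (fun η _ => t η + 1) (g ξ) hgζ
      exact lt_of_lt_of_le (h1.trans (by
        rw [Ordinal.add_one_eq_succ]; exact Order.lt_succ (t (g ξ)))) h2
    set φ' : Ordinal.{0} → Ordinal.{0} := fun ζ => max (φ ζ) (ζ + 1) with hφ'def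
    have hφ'lt : ∀ ζ < κ.ord, φ' ζ < κ.ord := fun ζ hζ =>
      max_lt (hφlt ζ hζ) (succ_lt_ord hκ hζ)
    -- the set C of closure points
    set C : Set Ordinal.{0} := {δ | δ < κ.ord ∧ ∀ ζ < δ, φ' ζ < δ} with hCdef
    have hA : ∀ ξ ∈ Y, ∀ δ ∈ C, δ ≤ ξ → δ ≤ g ξ := by
      intro ξ hξY δ hδ hδξ
      by_contra hlt
      push_neg at hlt
      have h1 : φ' (g ξ) < δ := hδ.2 _ hlt
      have h2 : g ξ + 1 < δ := lt_of_le_of_lt (le_max_right _ _) h1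
      have h3 : φ' (g ξ + 1) < δ := hδ.2 _ h2
      have h4 : ξ < φ (g ξ + 1) := hφprop _ ξ hξY
        (by rw [Ordinal.add_one_eq_succ]; exact Order.lt_succ (g ξ))
      have h5 : φ (g ξ + 1) ≤ φ' (g ξ + 1) := le_max_left _ _
      exact absurd ((h4.trans_le h5).trans h3) (not_lt.mpr hδξ)
    -- C is unbounded in κ.ord
    have hCub : ∀ β < κ.ord, ∃ δ ∈ C, β < δ := by
      intro β hβ
      set Ψ : Ordinal.{0} → Ordinal.{0} := fun γ =>
        if hγ : γ < κ.ord then Ordinal.bsup γ (fun ζ _ => φ' ζ + 1) else 0 with hΨdef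
      have hΨlt : ∀ γ < κ.ord, Ψ γ < κ.ord := by
        intro γ hγ
        simp only [hΨdef, dif_pos hγ]
        exact Cardinal.bsup_lt_ord_of_isRegular hreg (Cardinal.lt_ord.mp hγ)
          (fun ζ hζ => succ_lt_ord hκ (hφ'lt ζ (hζ.trans hγ)))
      have hΨprop : ∀ γ < κ.ord, ∀ ζ < γ, φ' ζ < Ψ γ := by
        intro γ hγ ζ hζ
        simp only [hΨdef, dif_pos hγ]
        calc φ' ζ < φ' ζ + 1 := by
              rw [Ordinal.add_one_eq_succ]; exact Order.lt_succ _
          _ ≤ _ := Ordinal.le_bsup (fun ζ _ => φ' ζ + 1) ζ hζ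
      set u : ℕ → Ordinal.{0} := fun n =>
        Nat.rec (β + 1) (fun _ x => max (Ψ x) (x + 1)) n with hudef
      have hu : ∀ n, u n < κ.ord := by
        intro n
        induction n with
        | zero => exact succ_lt_ord hκ hβ
        | succ n ih => exact max_lt (hΨlt _ ih) (succ_lt_ord hκ ih)
      set δ : Ordinal.{0} := ⨆ n, u n with hδdef
      have hδκ : δ < κ.ord :=
        Cardinal.iSup_lt_ord_of_isRegular hreg (by rw [Cardinal.mk_nat]; exact hunc) hu
      refine ⟨δ, ⟨hδκ, ?_⟩, ?_⟩
      · intro ζ hζ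
        obtain ⟨n, hn⟩ := Ordinal.lt_iSup_iff.mp hζ
        have h1 : φ' ζ < Ψ (u n) := hΨprop (u n) (hu n) ζ hn
        have h2 : Ψ (u n) ≤ u (n + 1) := le_max_left _ _
        exact h1.trans_le (h2.trans (Ordinal.le_iSup u (n + 1)))
      · have h0 : β < u 0 := by
          show β < β + 1
          rw [Ordinal.add_one_eq_succ]; exact Order.lt_succ β
        exact h0.trans_le (Ordinal.le_iSup u 0)
    -- the block-start function h
    set h : Ordinal.{0} → Ordinal.{0} := fun ξ => sSup {δ | δ ∈ C ∧ δ ≤ ξ} with hhdef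
    have hhle : ∀ ξ, h ξ ≤ ξ := fun ξ => csSup_le' (fun b hb => hb.2)
    have hhfib : ∀ v : Ordinal.{0}, BddIn κ {β | β < κ.ord ∧ h β = v} := by
      intro v
      by_cases hv : v < κ.ord
      · obtain ⟨δ, hδC, hvδ⟩ := hCub v hv
        refine ⟨δ, hδC.1, ?_⟩
        intro β hβ
        rw [mem_Iio]
        by_contra hc
        push_neg at hc
        have hbdd : BddAbove {δ' | δ' ∈ C ∧ δ' ≤ β} := ⟨β, fun x hx => hx.2⟩
        have : δ ≤ h β := le_csSup hbdd ⟨hδC, hc⟩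
        rw [hβ.2] at this
        exact absurd hvδ (not_lt.mpr this)
      · refine ⟨0, zero_lt_ord hκ, ?_⟩
        intro β hβ
        exact absurd (lt_of_le_of_lt (hβ.2 ▸ hhle β) hβ.1) hv
    -- q-point applied to h
    obtain ⟨Z, hZd, hZinj⟩ := hq h hhfib
    refine ⟨Y ∩ Z, dual_inter hJ hYd hZd, ?_⟩
    apply hJ.2.1 (Iio κ.ord \ (Y ∩ Z)) _ (dual_inter hJ hYd hZd).2
    rintro ξ ⟨α, hαξ, hαQ, hξX⟩
    refine ⟨hJ.1 (X α) (hX α) hξX, ?_⟩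
    rintro ⟨hξY, hξZ⟩
    have hgα : g ξ ≤ α := hgmin ξ α hαξ (hXX' α hξX)
    have hsets : {δ | δ ∈ C ∧ δ ≤ ξ} = {δ | δ ∈ C ∧ δ ≤ α} := by
      ext δ
      constructor
      · rintro ⟨h1, h2⟩
        exact ⟨h1, le_trans (hA ξ hξY δ h1 h2) hgα⟩
      · rintro ⟨h1, h2⟩
        exact ⟨h1, le_trans h2 (le_of_lt hαξ)⟩
    have hhαξ : h ξ = h α := by simp only [hhdef]; exact congrArg sSup hsets
    exact absurd (hZinj hξZ hαQ.2 hhαξ) (ne_of_gt hαξ)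

end PaperIdeals
end
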